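/- With the critical-locus setup for $n$ pairs of projections, the ideal inclusion $I(\mathcal{X}_r) \subseteq I(\mathcal{X}_n) : (I(C_{r+1}) \cdots I(C_n))$ holds, where $I(\mathcal{X}_m)$ is the ideal generated by the maximal minors of $M_{\mathcal{X}_m}$ and $I(C_j)$ is the ideal generated by the entries of $Q_j \cdot (x_0,\dots,x_k)^T$. -/

import Mathlib

open Matrix MvPolynomial
open Pointwise

/-- The matrix `M_{𝒳_m}` with entries in the polynomial ring `F[x_0,…,x_k]`:
row blocks `[P i ∣ 0 ⋯ Q i ⬝ (x_0,…,x_k)ᵀ ⋯ 0]`, `i = 0, …, m-1`. -/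
noncomputable def MpolyCrit (F : Type*) [Field F] (k : ℕ) (h : ℕ → ℕ)
    (P Q : (j : ℕ) → Matrix (Fin (h j + 1)) (Fin (k + 1)) F) (m : ℕ) :
    Matrix ((i : Fin m) × Fin (h i + 1)) (Fin (k + 1) ⊕ Fin m)
      (MvPolynomial (Fin (k + 1)) F) :=
  fun p => Sum.elim (fun c => C (P p.1 p.2 c))
    (fun j => if j = p.1 then ∑ l, C (Q (p.1 : ℕ) p.2 l) * X l else 0)

/-- The ideal `I(𝒳_m)` generated by the maximal minors of `M_{𝒳_m}`. -/
noncomputable def IcritLocus (F : Type*) [Field F] (k : ℕ) (h : ℕ → ℕ)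
    (P Q : (j : ℕ) → Matrix (Fin (h j + 1)) (Fin (k + 1)) F) (m : ℕ) :
    Ideal (MvPolynomial (Fin (k + 1)) F) :=
  Ideal.span (Set.range fun f : (Fin (k + 1) ⊕ Fin m) → ((i : Fin m) × Fin (h i + 1)) =>
    ((MpolyCrit F k h P Q m).submatrix f id).det)

/-- The ideal `I(C_j)` of the center of `Q_j`, generated by the entries of
`Q_j ⬝ (x_0,…,x_k)ᵀ`. -/
noncomputable def Icenter (F : Type*) [Field F] (k : ℕ) (h : ℕ → ℕ)
    (Q : (j : ℕ) → Matrix (Fin (h j + 1)) (Fin (k + 1)) F) (j : ℕ) :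
    Ideal (MvPolynomial (Fin (k + 1)) F) :=
  Ideal.span (Set.range fun a : Fin (h j + 1) => ∑ l, C (Q j a l) * X l)

lemma key {F : Type*} [Field F] (k r n : ℕ) (hrn : r ≤ n) (h : ℕ → ℕ)
    (P Q : (j : ℕ) → Matrix (Fin (h j + 1)) (Fin (k + 1)) F)
    (f : (Fin (k + 1) ⊕ Fin r) → (i : Fin r) × Fin (h i + 1))
    (a : (j : ℕ) → Fin (h j + 1)) :
    ((MpolyCrit F k h P Q r).submatrix f id).det *
      ∏ j ∈ Finset.Ico r n, (∑ l, C (Q j (a j) l) * X l) ∈ IcritLocus F k h P Q n := by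
  classical
  set R := MvPolynomial (Fin (k + 1)) F
  -- row selection for the big matrix
  set F' : (Fin (k + 1) ⊕ Fin n) → (i : Fin n) × Fin (h i + 1) := fun x =>
    match x with
    | .inl c => ⟨Fin.castLE hrn (f (.inl c)).1, (f (.inl c)).2⟩
    | .inr j =>
        if hj : (j : ℕ) < r then ⟨Fin.castLE hrn (f (.inr ⟨j, hj⟩)).1, (f (.inr ⟨j, hj⟩)).2⟩
        else ⟨j, a j⟩
    with hF'
  set e : ((Fin (k + 1) ⊕ Fin r) ⊕ Fin (n - r)) ≃ (Fin (k + 1) ⊕ Fin n) :=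
    (Equiv.sumAssoc (Fin (k + 1)) (Fin r) (Fin (n - r))).trans
      ((Equiv.refl (Fin (k + 1))).sumCongr
        (finSumFinEquiv.trans (finCongr (Nat.add_sub_cancel' hrn)))) with he
  set A := (MpolyCrit F k h P Q n).submatrix F' id with hA
  have he3 : ∀ i : Fin (n - r), e (.inr i) = .inr ⟨r + ↑i, by omega⟩ := by
    intro i
    simp [he, Fin.ext_iff]
  have hFe : ∀ p : Fin (k + 1) ⊕ Fin r,
      F' (e (.inl p)) = ⟨Fin.castLE hrn (f p).1, (f p).2⟩ := by
    rintro (c | j)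
    · rfl
    · have h1 : e (.inl (.inr j)) = .inr (Fin.castLE hrn j) := by
        simp [he, Fin.ext_iff]
      rw [h1]
      show (if hj : ((Fin.castLE hrn j : Fin n) : ℕ) < r then _ else _) = _
      rw [dif_pos (show ((Fin.castLE hrn j : Fin n) : ℕ) < r from j.isLt)]
      simp
  have key : A.submatrix e e =
      Matrix.fromBlocks ((MpolyCrit F k h P Q r).submatrix f id) 0
        (fun i q => A (e (.inr i)) (e (.inl q)))
        (Matrix.diagonal fun i : Fin (n - r) => ∑ l, C (Q (r + i) (a (r + i)) l) * X l) := by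
    apply Matrix.ext
    rintro (p | i) (q | i')
    · erw [Matrix.fromBlocks_apply₁₁]
      show MpolyCrit F k h P Q n (F' (e (.inl p))) (e (.inl q)) =
        MpolyCrit F k h P Q r (f p) q
      rw [hFe]
      rcases q with c | j
      · rfl
      · have h1 : e (.inl (.inr j)) = .inr (Fin.castLE hrn j) := by
          simp [he, Fin.ext_iff]
        rw [h1]
        show (if (Fin.castLE hrn j) = Fin.castLE hrn (f p).1 then
            ∑ l, C (Q (↑(Fin.castLE hrn (f p).1)) (f p).2 l) * X l else 0) =
          (if j = (f p).1 then ∑ l, C (Q (↑(f p).1) (f p).2 l) * X l else 0)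
        simp [Fin.castLE_inj]
    · erw [Matrix.fromBlocks_apply₁₂, Matrix.zero_apply]
      show MpolyCrit F k h P Q n (F' (e (.inl p))) (e (.inr i')) = 0
      rw [hFe, he3]
      show (if (⟨r + ↑i', by omega⟩ : Fin n) = Fin.castLE hrn (f p).1 then _ else 0) = 0
      rw [if_neg]
      intro hc
      have h2 := congrArg Fin.val hc
      have h3 := ((f p).1).isLt
      simp [Fin.coe_castLE] at h2
      omega
    · rfl
    · erw [Matrix.fromBlocks_apply₂₂]
      show MpolyCrit F k h P Q n (F' (e (.inr i))) (e (.inr i')) = _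
      rw [he3 i, he3 i']
      have hrow : F' (.inr (⟨r + ↑i, by omega⟩ : Fin n)) =
          ⟨⟨r + ↑i, by omega⟩, a (r + ↑i)⟩ := by
        show (if hj : ((⟨r + ↑i, by omega⟩ : Fin n) : ℕ) < r then _ else _) = _
        rw [dif_neg (by simp)]
      rw [hrow]
      show (if (⟨r + ↑i', by omega⟩ : Fin n) = (⟨r + ↑i, by omega⟩ : Fin n) then
          ∑ l, C (Q (r + ↑i) (a (r + ↑i)) l) * X l else 0) = _
      rw [Matrix.diagonal_apply]
      by_cases hii : i = i'
      · subst hii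
        rw [if_pos rfl, if_pos rfl]
      · rw [if_neg, if_neg hii]
        intro hc
        have h2 := congrArg Fin.val hc
        simp at h2
        exact hii (Fin.ext h2.symm)
  have hdet : A.det = ((MpolyCrit F k h P Q r).submatrix f id).det *
      ∏ j ∈ Finset.Ico r n, (∑ l, C (Q j (a j) l) * X l) := by
    rw [← Matrix.det_submatrix_equiv_self e A, key]
    erw [Matrix.det_fromBlocks_zero₁₂]
    rw [
      Matrix.det_diagonal, Finset.prod_Ico_eq_prod_range]
    rw [← Fin.prod_univ_eq_prod_range (fun i => ∑ l, C (Q (r + i) (a (r + i)) l) * X l) (n - r)]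
  rw [← hdet]
  exact Ideal.subset_span ⟨F', rfl⟩

/-- scheme-theoretic nesting of critical loci,
`I(𝒳_r) ⊆ I(𝒳_n) : (I(C_{r+1}) ⋯ I(C_n))`. -/
theorem stmt3 {F : Type*} [Field F] (k r n : ℕ) (hrn : r < n) (h : ℕ → ℕ)
    (P Q : (j : ℕ) → Matrix (Fin (h j + 1)) (Fin (k + 1)) F) :
    IcritLocus F k h P Q r ≤
      Submodule.colon (IcritLocus F k h P Q n)
        ((∏ j ∈ Finset.Ico r n, Icenter F k h Q j : Ideal (MvPolynomial (Fin (k + 1)) F)) : Set (MvPolynomial (Fin (k + 1)) F)) := by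
  classical
  refine Ideal.span_le.2 ?_
  rintro _ ⟨f, rfl⟩
  rw [SetLike.mem_coe, Submodule.mem_colon]
  intro p hp
  rw [smul_eq_mul, mul_comm]
  suffices hs : p ∈ (IcritLocus F k h P Q n).colon
      (Ideal.span {((MpolyCrit F k h P Q r).submatrix f id).det}) by
    rw [Ideal.mem_colon_span_singleton] at hs
    exact hs
  revert p hp
  refine fun p hp => ?_
  have hps : (∏ j ∈ Finset.Ico r n, Icenter F k h Q j) =
      Ideal.span (∏ j ∈ Finset.Ico r n,
        Set.range fun a : Fin (h j + 1) => ∑ l, C (Q j a l) * X l) := by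
    rw [← Ideal.prod_span]
    rfl
  rw [hps] at hp
  revert hp
  refine fun hp => Ideal.span_le.2 ?_ hp
  intro x hx
  rw [Set.mem_finset_prod] at hx
  obtain ⟨g, hg, rfl⟩ := hx
  have hg' : ∀ j ∈ Finset.Ico r n, ∃ a : Fin (h j + 1),
      (∑ l, C (Q j a l) * X l) = g j := fun j hj => hg hj
  choose aa haa using hg'
  set a' : (j : ℕ) → Fin (h j + 1) := fun j =>
    if hj : j ∈ Finset.Ico r n then aa j hj else 0 with ha'
  have hprod : ∏ j ∈ Finset.Ico r n, g j =
      ∏ j ∈ Finset.Ico r n, (∑ l, C (Q j (a' j) l) * X l) := by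
    refine Finset.prod_congr rfl fun j hj => ?_
    rw [ha']
    simp only [dif_pos hj]
    rw [haa j hj]
  rw [SetLike.mem_coe, Ideal.mem_colon_span_singleton, hprod, mul_comm]
  exact key k r n hrn.le h P Q f a'
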